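/- arXiv:2003.08794 — 2 statements merged into one kernel-verified Lean document; each statement's English description precedes it below -/
import Mathlib

section
/- Let C > 0, s > 1, and define for κ ∈ (0,1) the function t ↦ κ^{1/2} t^{1/s − 1/2} (e^{C t^{(s−1)/s}} − 1) on (0,∞). For every α ∈ (0,1) there exist c > 0 and κ_0 ∈ (0,1) such that for all κ < κ_0 and all t with 0 < t ≤ c (log(1/κ))^{s/(s−1)}, one has κ^{1/2} t^{1/s − 1/2} (e^{C t^{(s−1)/s}} − 1) ≤ κ^{(1−α)/2}. -/
/-- Let `C > 0`, `s > 1`. For every `α ∈ (0,1)` there exist `c > 0` and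
`κ₀ ∈ (0,1)` such that for all `κ < κ₀` and all `t` with `0 < t ≤ c (log (1/κ))^{s/(s-1)}`,
`κ^{1/2} t^{1/s - 1/2} (exp (C t^{(s-1)/s}) - 1) ≤ κ^{(1-α)/2}`. -/
theorem stmt13 (C s α : ℝ) (hC : 0 < C) (hs : 1 < s) (hα0 : 0 < α) (hα1 : α < 1) :
    ∃ c > (0:ℝ), ∃ κ₀ ∈ Set.Ioo (0:ℝ) 1, ∀ κ : ℝ, 0 < κ → κ < κ₀ →
      ∀ t : ℝ, 0 < t → t ≤ c * Real.log (1/κ) ^ (s/(s - 1)) →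
        κ ^ ((1:ℝ)/2) * t ^ (1/s - 1/2) * (Real.exp (C * t ^ ((s - 1)/s)) - 1) ≤
          κ ^ ((1 - α)/2) := by
  have hs0 : (0:ℝ) < s := lt_trans one_pos hs
  have hs1 : (0:ℝ) < s - 1 := by linarith
  set β : ℝ := α / 8 with hβdef
  have hβ : 0 < β := by positivity
  set q : ℝ := s / (s - 1) with hqdef
  have hq : 0 < q := div_pos hs0 hs1
  set c : ℝ := (β / C) ^ q with hcdef
  have hβC : 0 < β / C := div_pos hβ hC
  have hc : 0 < c := Real.rpow_pos_of_pos hβC q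
  have hq1 : q * ((s - 1) / s) = 1 := by
    field_simp [hqdef]
    rw [hqdef, div_mul_cancel₀ _ hs1.ne']
  have hcs : c ^ ((s - 1) / s) = β / C := by
    rw [hcdef, ← Real.rpow_mul hβC.le, hq1, Real.rpow_one]
  set D : ℝ := C * c ^ ((1:ℝ)/2) with hDdef
  have hD : 0 < D := by positivity
  -- choose M from the asymptotic vanishing of L^(q/2) exp(-βL)
  have htend := tendsto_rpow_mul_exp_neg_mul_atTop_nhds_zero (q / 2) β hβ
  have hev : ∀ᶠ x in Filter.atTop,
      x ^ (q / 2) * Real.exp (-β * x) < D⁻¹ :=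
    htend.eventually_lt_const (by positivity)
  obtain ⟨M, hM⟩ := Filter.eventually_atTop.mp hev
  refine ⟨c, hc, Real.exp (-(max M 1)), ⟨Real.exp_pos _, by
    have : -(max M 1) < 0 := by
      have := le_max_right M 1; linarith
    calc Real.exp (-(max M 1)) < Real.exp 0 := Real.exp_lt_exp.mpr this
      _ = 1 := Real.exp_zero⟩, ?_⟩
  intro κ hκ hκ₀ t ht htle
  have hκ1 : κ < 1 := by
    have h1 : Real.exp (-(max M 1)) < 1 := by
      have : -(max M 1) < 0 := by have := le_max_right M 1; linarith
      calc Real.exp (-(max M 1)) < Real.exp 0 := Real.exp_lt_exp.mpr this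
        _ = 1 := Real.exp_zero
    linarith
  set L : ℝ := -Real.log κ with hLdef
  have hlog : Real.log κ < -(max M 1) := by
    have := Real.log_lt_log hκ hκ₀
    rwa [Real.log_exp] at this
  have hLM1 : max M 1 < L := by rw [hLdef]; linarith
  have hL0 : 0 < L := lt_trans one_pos (lt_of_le_of_lt (le_max_right M 1) hLM1)
  have hLM : M ≤ L := (le_max_left M 1).trans hLM1.le
  have hlog1κ : Real.log (1 / κ) = L := by
    rw [one_div, Real.log_inv, hLdef]
  rw [hlog1κ] at htle
  -- key pieces
  have hts : t ^ ((s - 1) / s) ≤ β / C * L := by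
    have h1 : t ^ ((s - 1) / s) ≤ (c * L ^ q) ^ ((s - 1) / s) :=
      Real.rpow_le_rpow ht.le htle (by positivity)
    have h2 : (c * L ^ q) ^ ((s - 1) / s)
        = c ^ ((s - 1) / s) * (L ^ q) ^ ((s - 1) / s) :=
      Real.mul_rpow hc.le (Real.rpow_nonneg hL0.le q)
    have h3 : (L ^ q) ^ ((s - 1) / s) = L := by
      rw [← Real.rpow_mul hL0.le, hq1, Real.rpow_one]
    rw [h2, h3, hcs] at h1
    exact h1
  have hth : t ^ ((1:ℝ)/2) ≤ c ^ ((1:ℝ)/2) * L ^ (q / 2) := by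
    have h1 : t ^ ((1:ℝ)/2) ≤ (c * L ^ q) ^ ((1:ℝ)/2) :=
      Real.rpow_le_rpow ht.le htle (by norm_num)
    have h2 : (c * L ^ q) ^ ((1:ℝ)/2)
        = c ^ ((1:ℝ)/2) * (L ^ q) ^ ((1:ℝ)/2) :=
      Real.mul_rpow hc.le (Real.rpow_nonneg hL0.le q)
    have h3 : (L ^ q) ^ ((1:ℝ)/2) = L ^ (q / 2) := by
      rw [← Real.rpow_mul hL0.le]; ring_nf
    rw [h2, h3] at h1
    exact h1
  set x : ℝ := C * t ^ ((s - 1) / s) with hxdef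
  have hx0 : 0 ≤ x := by positivity
  have hexp1 : Real.exp x ≤ Real.exp (β * L) := by
    apply Real.exp_le_exp.mpr
    calc x ≤ C * (β / C * L) := by
          exact mul_le_mul_of_nonneg_left hts hC.le
      _ = β * L := by field_simp
  have hE : Real.exp x - 1 ≤ x * Real.exp x := by
    have h1 := Real.add_one_le_exp (-x)
    have h2 : Real.exp (-x) * Real.exp x = 1 := by
      rw [← Real.exp_add]; simp
    nlinarith [Real.exp_pos x]
  have hstep : D * L ^ (q / 2) ≤ Real.exp (β * L) := by
    have h := hM L hLM
    rw [neg_mul, Real.exp_neg, ← div_eq_mul_inv,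
      div_lt_iff₀ (Real.exp_pos _)] at h
    calc D * L ^ (q / 2) ≤ D * (D⁻¹ * Real.exp (β * L)) := by
          apply mul_le_mul_of_nonneg_left _ hD.le
          exact h.le
      _ = Real.exp (β * L) := by
          rw [← mul_assoc, mul_inv_cancel₀ hD.ne', one_mul]
  have hrpow : κ ^ (-β : ℝ) = Real.exp (β * L) := by
    rw [Real.rpow_def_of_pos hκ, hLdef]; ring_nf
  have htt : t ^ (1 / s - 1 / 2) * t ^ ((s - 1) / s) = t ^ ((1:ℝ)/2) := by
    rw [← Real.rpow_add ht]
    congr 1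
    field_simp
    ring
  calc κ ^ ((1:ℝ)/2) * t ^ (1/s - 1/2) * (Real.exp x - 1)
      ≤ κ ^ ((1:ℝ)/2) * t ^ (1/s - 1/2) * (x * Real.exp x) := by
        apply mul_le_mul_of_nonneg_left hE
        positivity
    _ = κ ^ ((1:ℝ)/2) * (C * t ^ ((1:ℝ)/2)) * Real.exp x := by
        rw [hxdef]
        rw [show κ ^ ((1:ℝ)/2) * t ^ (1/s - 1/2) *
          (C * t ^ ((s-1)/s) * Real.exp (C * t ^ ((s-1)/s)))
          = κ ^ ((1:ℝ)/2) * (C * (t ^ (1/s - 1/2) * t ^ ((s-1)/s))) *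
            Real.exp (C * t ^ ((s-1)/s)) by ring, htt]
    _ ≤ κ ^ ((1:ℝ)/2) * (C * (c ^ ((1:ℝ)/2) * L ^ (q/2))) * Real.exp (β * L) := by
        have h0 : 0 ≤ κ ^ ((1:ℝ)/2) := by positivity
        apply mul_le_mul _ hexp1 (Real.exp_pos x).le (by positivity)
        apply mul_le_mul_of_nonneg_left _ h0
        exact mul_le_mul_of_nonneg_left hth hC.le
    _ ≤ κ ^ ((1:ℝ)/2) * Real.exp (β * L) * Real.exp (β * L) := by
        apply mul_le_mul_of_nonneg_right _ (Real.exp_pos _).le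
        apply mul_le_mul_of_nonneg_left _ (by positivity)
        calc C * (c ^ ((1:ℝ)/2) * L ^ (q/2)) = D * L ^ (q/2) := by
              rw [hDdef]; ring
          _ ≤ Real.exp (β * L) := hstep
    _ = κ ^ ((1:ℝ)/2 + -β + -β) := by
        rw [Real.rpow_add hκ, Real.rpow_add hκ, hrpow]
    _ ≤ κ ^ ((1 - α)/2) := by
        apply Real.rpow_le_rpow_of_exponent_ge hκ hκ1.le
        rw [hβdef]; linarith
end

section
/- Let s ∈ (1, 2), κ ∈ (0,1), and suppose D ∈ (0,1) satisfies both a preliminary bound D ≤ C₁ (log(1/κ))^{−2} and the refined inequality log(1/δ) ≤ C₂ D^{−(s−1)/s} with δ = κ^{1/2} D^{1/2 − 1/s}. Then there are constants κ₀ ∈ (0,1) and C₃ (depending only on C₁, C₂, s) such that for κ < κ₀, D ≤ C₃ (log(1/κ))^{−s/(s−1)}. -/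
set_option maxHeartbeats 1000000 in
/-- Let `s ∈ (1,2)`, `κ ∈ (0,1)`, and suppose `D ∈ (0,1)` satisfies both the
preliminary bound `D ≤ C₁ (log (1/κ))^{-2}` and the refined inequality
`log (1/δ) ≤ C₂ D^{-(s-1)/s}` with `δ = κ^{1/2} D^{1/2 - 1/s}`. Then there are `κ₀ ∈ (0,1)`
and `C₃`, depending only on `C₁, C₂, s`, such that for `κ < κ₀`,
`D ≤ C₃ (log (1/κ))^{-s/(s-1)}`. -/
theorem stmt18 (s C₁ C₂ : ℝ) (hs1 : 1 < s) (hs2 : s < 2) (hC₁ : 0 < C₁) (hC₂ : 0 < C₂) :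
    ∃ κ₀ ∈ Set.Ioo (0:ℝ) 1, ∃ C₃ > (0:ℝ), ∀ κ D : ℝ, 0 < κ → κ < κ₀ → 0 < D → D < 1 →
      D ≤ C₁ * Real.log (1/κ) ^ (-(2:ℝ)) →
      Real.log (1 / (κ ^ ((1:ℝ)/2) * D ^ (1/2 - 1/s))) ≤ C₂ * D ^ (-((s - 1)/s)) →
      D ≤ C₃ * Real.log (1/κ) ^ (-(s/(s - 1))) := by
  have hs1' : (0:ℝ) < s - 1 := by linarith
  have hs0 : (0:ℝ) < s := by linarith
  set c : ℝ := (2 - s) / (2 * (s - 1)) with hc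
  have hcpos : 0 < c := by
    apply div_pos <;> linarith
  set L₀ : ℝ := max (64 * c ^ 2) 1 with hL₀
  have hL₀1 : (1:ℝ) ≤ L₀ := le_max_right _ _
  have hq : 0 < s / (s - 1) := div_pos hs0 hs1'
  refine ⟨Real.exp (-L₀), ⟨Real.exp_pos _, ?_⟩,
    max 1 ((4 * C₂) ^ (s / (s - 1))), lt_of_lt_of_le one_pos (le_max_left _ _), ?_⟩
  · exact Real.exp_lt_one_iff.mpr (by linarith)
  intro κ D hκ hκ₀ hD0 hD1 hpre href
  set L : ℝ := Real.log (1 / κ) with hLdef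
  have hLeq : L = -Real.log κ := by rw [hLdef, one_div, Real.log_inv]
  have hL : L₀ < L := by
    have := Real.log_lt_log hκ hκ₀
    rw [Real.log_exp] at this
    rw [hLeq]; linarith
  have hLpos : 0 < L := by linarith
  have hL1 : 1 ≤ L := by linarith
  have hLq : 0 < L ^ (-(s / (s - 1))) := Real.rpow_pos_of_pos hLpos _
  by_cases hcase : D ≤ L ^ (-(s / (s - 1)))
  · calc D ≤ 1 * L ^ (-(s / (s - 1))) := by linarith
    _ ≤ max 1 ((4 * C₂) ^ (s / (s - 1))) * L ^ (-(s / (s - 1))) := by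
        apply mul_le_mul_of_nonneg_right (le_max_left _ _) hLq.le
  push_neg at hcase
  have hlogD : -(s / (s - 1)) * Real.log L < Real.log D := by
    have := Real.log_lt_log (Real.rpow_pos_of_pos hLpos _) hcase
    rwa [Real.log_rpow hLpos] at this
  have hlogL0 : 0 ≤ Real.log L := Real.log_nonneg hL1
  -- c * log L ≤ L / 4
  have hsqrt : 8 * c ≤ Real.sqrt L := by
    rw [show (8:ℝ) * c = Real.sqrt ((8 * c) ^ 2) from
      (Real.sqrt_sq (by positivity)).symm]
    apply Real.sqrt_le_sqrt
    nlinarith [le_max_left (64 * c ^ 2) (1:ℝ)]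
  have hsq : Real.sqrt L * Real.sqrt L = L := Real.mul_self_sqrt hLpos.le
  have hlogsqrt : Real.log L ≤ 2 * (Real.sqrt L - 1) := by
    have h1 : Real.log (Real.sqrt L) ≤ Real.sqrt L - 1 :=
      Real.log_le_sub_one_of_pos (Real.sqrt_pos.mpr hLpos)
    have h2 : Real.log (Real.sqrt L) = Real.log L / 2 := Real.log_sqrt hLpos.le
    linarith [h2 ▸ h1]
  have hclog : c * Real.log L ≤ L / 4 := by
    nlinarith [Real.sqrt_nonneg L]
  -- compute log(1/δ)
  have hδ : Real.log (1 / (κ ^ ((1:ℝ)/2) * D ^ (1/2 - 1/s)))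
      = L / 2 - (1/2 - 1/s) * Real.log D := by
    rw [one_div, Real.log_inv, Real.log_mul (by positivity) (by positivity),
      Real.log_rpow hκ, Real.log_rpow hD0, hLeq]
    ring
  have hA : 0 < 1 / s - 1 / 2 := by
    rw [sub_pos, div_lt_div_iff₀ (by norm_num) hs0]; linarith
  have hcid : (1 / s - 1 / 2) * (s / (s - 1)) = c := by
    rw [hc]; field_simp
  have hbound : (1/2 - 1/s) * Real.log D < c * Real.log L := by
    have := mul_lt_mul_of_pos_left hlogD hA
    nlinarith
  have hmain : L / 4 ≤ C₂ * D ^ (-((s - 1)/s)) := by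
    rw [hδ] at href
    linarith
  have hDp0 : 0 < D ^ ((s - 1)/s) := Real.rpow_pos_of_pos hD0 _
  have hneg : D ^ (-((s - 1)/s)) = (D ^ ((s - 1)/s))⁻¹ := Real.rpow_neg hD0.le _
  have hDp : D ^ ((s - 1)/s) ≤ 4 * C₂ / L := by
    rw [le_div_iff₀ hLpos]
    have h1 : L / 4 * D ^ ((s - 1)/s) ≤ C₂ * (D ^ ((s - 1)/s))⁻¹ * D ^ ((s - 1)/s) := by
      apply mul_le_mul_of_nonneg_right _ hDp0.le
      rw [← hneg]; exact hmain
    rw [mul_assoc, inv_mul_cancel₀ hDp0.ne', mul_one] at h1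
    linarith
  have h4C : 0 < 4 * C₂ / L := by positivity
  have hfin : D ≤ (4 * C₂ / L) ^ (s / (s - 1)) := by
    have h1 : (D ^ ((s - 1)/s)) ^ (s / (s - 1)) ≤ (4 * C₂ / L) ^ (s / (s - 1)) :=
      Real.rpow_le_rpow hDp0.le hDp hq.le
    have hpq : (s - 1)/s * (s / (s - 1)) = 1 := by field_simp
    rwa [← Real.rpow_mul hD0.le, hpq, Real.rpow_one] at h1
  calc D ≤ (4 * C₂ / L) ^ (s / (s - 1)) := hfin
  _ = (4 * C₂) ^ (s / (s - 1)) * L ^ (-(s / (s - 1))) := by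
      rw [Real.div_rpow (by positivity) hLpos.le, Real.rpow_neg hLpos.le, div_eq_mul_inv]
  _ ≤ max 1 ((4 * C₂) ^ (s / (s - 1))) * L ^ (-(s / (s - 1))) :=
      mul_le_mul_of_nonneg_right (le_max_right _ _) hLq.le
end
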